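/- Let m ≥ 1 be an integer and let c₀₁, c₀₂ ∈ Fin m be arbitrary baseline labels. Then the function α ↦ ∑_{s ∈ Fin m} ∑_{t ∈ Fin m} q_α(s, s, t, t; c₀₁, c₀₂) tends to 1/m² as α → ∞ (along Filter.atTop). In words: whatever the baseline labels, the probability that the two units co-cluster in both views tends to 1/m² as α → ∞. -/

import Mathlib

/-- Indicator that the triple `(a, b, c)` has all three entries equal. -/
def isA {m : ℕ} (a b c : Fin m) : ℕ :=
  if a = b ∧ b = c then 1 else 0

/-- Indicator that the triple `(a, b, c)` has three pairwise distinct entries. -/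
def isB {m : ℕ} (a b c : Fin m) : ℕ :=
  if a ≠ b ∧ b ≠ c ∧ a ≠ c then 1 else 0

/-- Indicator that the triple `(a, b, c)` has exactly two equal entries. -/
def isC {m : ℕ} (a b c : Fin m) : ℕ :=
  if (a = b ∧ b ≠ c) ∨ (b ≠ c ∧ a = c) ∨ (a ≠ b ∧ b = c) then 1 else 0

/-- The conditional probability `q_α(c₁₁, c₁₂, c₂₁, c₂₂; c₀₁, c₀₂)` of the view
labels of two units in two views given their baseline labels (Proposition 1 of
the paper, `n = J = 2` case).  The triple of unit `i` is `(c₀ᵢ, c₁ᵢ, c₂ᵢ)`. -/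
noncomputable def q (m : ℕ) (α : ℝ) (c11 c12 c21 c22 c01 c02 : Fin m) : ℝ :=
  ((α + 2) * (α + 1)) ^ (isA c01 c11 c21 + isA c02 c12 c22) *
    (α ^ 2) ^ (isB c01 c11 c21 + isB c02 c12 c22) *
    ((α + 1) * α) ^ (isC c01 c11 c21 + isC c02 c12 c22) /
      ((α * m + 2) * (α * m + 1)) ^ 2

lemma isABC_sum {m : ℕ} (a b c : Fin m) : isA a b c + isB a b c + isC a b c = 1 := by
  unfold isA isB isC
  by_cases h1 : a = b <;> by_cases h2 : b = c <;> by_cases h3 : a = c <;> simp_all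

/-- Generic limit: a monic degree-4 numerator over `((αm+2)(αm+1))²` tends to `1/m⁴`. -/
lemma lim4 (m : ℕ) (hm : 1 ≤ m) (p r u v : ℝ) :
    Filter.Tendsto (fun α : ℝ => ((α + p) * (α + r) * (α + u) * (α + v)) /
      ((α * m + 2) * (α * m + 1)) ^ 2) Filter.atTop (nhds (1 / (m : ℝ) ^ 4)) := by
  have hm0 : (0:ℝ) < m := by exact_mod_cast hm
  have heq : ∀ᶠ α in Filter.atTop,
      ((α + p) * (α + r) * (α + u) * (α + v)) / ((α * m + 2) * (α * m + 1)) ^ 2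
      = ((1 + p * α⁻¹) * (1 + r * α⁻¹) * (1 + u * α⁻¹) * (1 + v * α⁻¹)) /
        ((m + 2 * α⁻¹) * (m + 1 * α⁻¹)) ^ 2 := by
    filter_upwards [Filter.eventually_gt_atTop (0:ℝ)] with α hα
    have hα' : α ≠ 0 := ne_of_gt hα
    have h1 : α * m + 2 ≠ 0 := by positivity
    have h2 : α * m + 1 ≠ 0 := by positivity
    have h3 : (m:ℝ) + 2 * α⁻¹ ≠ 0 := by positivity
    have h4 : (m:ℝ) + 1 * α⁻¹ ≠ 0 := by positivity
    field_simp
  refine Filter.Tendsto.congr' (Filter.EventuallyEq.symm heq) ?_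
  have hinv : Filter.Tendsto (fun α : ℝ => α⁻¹) Filter.atTop (nhds 0) :=
    tendsto_inv_atTop_zero
  have hnum : Filter.Tendsto (fun α : ℝ =>
      (1 + p * α⁻¹) * (1 + r * α⁻¹) * (1 + u * α⁻¹) * (1 + v * α⁻¹))
      Filter.atTop (nhds 1) := by
    have h : ∀ w : ℝ, Filter.Tendsto (fun α : ℝ => 1 + w * α⁻¹) Filter.atTop (nhds 1) := by
      intro w
      have := (hinv.const_mul w).const_add 1
      simpa using this
    have := (((h p).mul (h r)).mul (h u)).mul (h v)
    simpa using this
  have hden : Filter.Tendsto (fun α : ℝ =>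
      ((m + 2 * α⁻¹) * (m + 1 * α⁻¹)) ^ 2) Filter.atTop (nhds ((m:ℝ)^4)) := by
    have h : ∀ w : ℝ, Filter.Tendsto (fun α : ℝ => (m:ℝ) + w * α⁻¹) Filter.atTop (nhds m) := by
      intro w
      have := (hinv.const_mul w).const_add (m:ℝ)
      simpa using this
    have := (((h 2).mul (h 1)).pow 2)
    have hval : ((m:ℝ) * m) ^ 2 = (m:ℝ)^4 := by ring
    rw [hval] at this
    exact this
  have hden' : ((m:ℝ)^4) ≠ 0 := by positivity
  have := hnum.div hden hden'
  exact this

lemma aux_lim (m : ℕ) (hm : 1 ≤ m) (a b c : ℕ) (h : a + b + c = 2) :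
    Filter.Tendsto (fun α : ℝ => ((α + 2) * (α + 1)) ^ a * (α ^ 2) ^ b *
      ((α + 1) * α) ^ c / ((α * m + 2) * (α * m + 1)) ^ 2)
      Filter.atTop (nhds (1 / (m : ℝ) ^ 4)) := by
  have ha : a ≤ 2 := by omega
  have hb : b ≤ 2 := by omega
  have hc : c ≤ 2 := by omega
  interval_cases a <;> interval_cases b <;> interval_cases c <;> try omega
  · exact (lim4 m hm 1 0 1 0).congr (fun α => by ring)
  · exact (lim4 m hm 0 0 1 0).congr (fun α => by ring)
  · exact (lim4 m hm 0 0 0 0).congr (fun α => by ring)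
  · exact (lim4 m hm 2 1 1 0).congr (fun α => by ring)
  · exact (lim4 m hm 2 1 0 0).congr (fun α => by ring)
  · exact (lim4 m hm 2 1 2 1).congr (fun α => by ring)

/-- Corollary 1: whatever the baseline labels, the probability of co-clustering
in both views tends to `1/m²` as `α → ∞`. -/
theorem cocluster_tendsto_alpha_infty (m : ℕ) (hm : 1 ≤ m) (c01 c02 : Fin m) :
    Filter.Tendsto (fun α : ℝ => ∑ s : Fin m, ∑ t : Fin m, q m α s s t t c01 c02)
      Filter.atTop (nhds (1 / (m : ℝ) ^ 2)) := by
  have hm0 : (0:ℝ) < m := by exact_mod_cast hm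
  have hterm : ∀ s t : Fin m, Filter.Tendsto (fun α : ℝ => q m α s s t t c01 c02)
      Filter.atTop (nhds (1 / (m : ℝ) ^ 4)) := by
    intro s t
    have h2 : (isA c01 s t + isA c02 s t) + (isB c01 s t + isB c02 s t) +
        (isC c01 s t + isC c02 s t) = 2 := by
      have := isABC_sum c01 s t
      have := isABC_sum c02 s t
      omega
    exact aux_lim m hm _ _ _ h2
  have hsum : Filter.Tendsto (fun α : ℝ => ∑ s : Fin m, ∑ t : Fin m, q m α s s t t c01 c02)
      Filter.atTop (nhds (∑ _s : Fin m, ∑ _t : Fin m, 1 / (m : ℝ) ^ 4)) := by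
    refine tendsto_finset_sum _ fun s _ => ?_
    exact tendsto_finset_sum _ fun t _ => hterm s t
  have hval : (∑ _s : Fin m, ∑ _t : Fin m, 1 / (m : ℝ) ^ 4) = 1 / (m : ℝ) ^ 2 := by
    simp [Finset.sum_const, Finset.card_univ]
    field_simp
  rwa [hval] at hsum
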